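/- arXiv:0907.0513 — 2 statements merged into one kernel-verified Lean document; each statement's English description precedes it below -/
import Mathlib

section
/- The exponential generating function Σ_{n≥0} G_1(n) x^n/n! equals e^{1-√(1-2x)} / √(1-2x). -/
open Filter Topology Set

/-- `G₁ n = Σ_{i=0}^{n} (n+i)!/((n-i)!·i!·2^i)`. -/
noncomputable def G1 (n : ℕ) : ℝ :=
  ∑ i ∈ Finset.range (n + 1),
    (Nat.factorial (n + i) : ℝ) /
      ((Nat.factorial (n - i) : ℝ) * (Nat.factorial i : ℝ) * 2 ^ i)

lemma G1_zero : G1 0 = 1 := by simp [G1, Nat.factorial]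

lemma G1_one : G1 1 = 2 := by
  simp [G1, Finset.sum_range_succ, Nat.factorial]
  norm_num

lemma G1_rec (n : ℕ) : G1 (n + 2) = (2 * n + 3) * G1 (n + 1) + G1 n := by
  -- termwise identity for i < n
  have key : ∀ i < n,
      ((Nat.factorial (n + 2 + (i+1)) : ℝ) /
        ((Nat.factorial (n + 2 - (i+1)) : ℝ) * (Nat.factorial (i+1)) * 2 ^ (i+1)))
      = (2 * n + 3) * ((Nat.factorial (n + 1 + i) : ℝ) /
          ((Nat.factorial (n + 1 - i) : ℝ) * (Nat.factorial i) * 2 ^ i))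
        + ((Nat.factorial (n + (i+1)) : ℝ) /
          ((Nat.factorial (n - (i+1)) : ℝ) * (Nat.factorial (i+1)) * 2 ^ (i+1))) := by
    intro i hi
    obtain ⟨k, rfl⟩ : ∃ k, n = i + 1 + k := ⟨n - (i+1), by omega⟩
    have e1 : i + 1 + k + 2 + (i + 1) = (2*i + k + 2) + 2 := by ring
    have e2 : i + 1 + k + 2 - (i + 1) = k + 2 := by omega
    have e3 : i + 1 + k + 1 + i = 2*i + k + 2 := by ring
    have e4 : i + 1 + k + 1 - i = k + 2 := by omega
    have e5 : i + 1 + k + (i + 1) = 2*i + k + 2 := by ring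
    have e6 : i + 1 + k - (i + 1) = k := by omega
    rw [e1, e2, e3, e4, e5, e6]
    have f1 : (Nat.factorial (2*i + k + 2 + 2) : ℝ)
        = (2*i + k + 4) * (2*i + k + 3) * Nat.factorial (2*i + k + 2) := by
      rw [show 2*i + k + 2 + 2 = (2*i + k + 3) + 1 by ring, Nat.factorial_succ,
        show 2*i + k + 3 = (2*i + k + 2) + 1 by ring, Nat.factorial_succ]
      push_cast; ring
    have f2 : (Nat.factorial (k + 2) : ℝ) = (k+2) * (k+1) * Nat.factorial k := by
      rw [Nat.factorial_succ, Nat.factorial_succ]; push_cast; ring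
    have f3 : (Nat.factorial (i + 1) : ℝ) = (i+1) * Nat.factorial i := by
      rw [Nat.factorial_succ]; push_cast; ring
    rw [f1, f2, f3]
    have h2 : (2:ℝ) ^ (i+1) = 2 * 2 ^ i := by ring
    rw [h2]
    have hk : (Nat.factorial k : ℝ) ≠ 0 := Nat.cast_ne_zero.2 (Nat.factorial_ne_zero k)
    have hik : (Nat.factorial i : ℝ) ≠ 0 := Nat.cast_ne_zero.2 (Nat.factorial_ne_zero i)
    have h2i : (2:ℝ) ^ i ≠ 0 := by positivity
    field_simp
    push_cast
    ring
  set f : ℕ → ℝ := fun i => (Nat.factorial (n + 2 + i) : ℝ) /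
      ((Nat.factorial (n + 2 - i) : ℝ) * (Nat.factorial i) * 2 ^ i) with hf
  set g : ℕ → ℝ := fun i => (Nat.factorial (n + 1 + i) : ℝ) /
      ((Nat.factorial (n + 1 - i) : ℝ) * (Nat.factorial i) * 2 ^ i) with hg
  set h : ℕ → ℝ := fun i => (Nat.factorial (n + i) : ℝ) /
      ((Nat.factorial (n - i) : ℝ) * (Nat.factorial i) * 2 ^ i) with hh
  have eG2 : G1 (n + 2) = ∑ i ∈ Finset.range (n + 3), f i := rfl
  have eG1 : G1 (n + 1) = ∑ i ∈ Finset.range (n + 2), g i := rfl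
  have eG0 : G1 n = ∑ i ∈ Finset.range (n + 1), h i := rfl
  rw [eG2, eG1, eG0]
  rw [show n + 3 = (n + 2) + 1 by ring, Finset.sum_range_succ',
    Finset.sum_range_succ (fun i => f (i+1)) (n+1), Finset.sum_range_succ (fun i => f (i+1)) n,
    Finset.sum_range_succ g (n+1), Finset.sum_range_succ g n,
    Finset.sum_range_succ' h n]
  have hsum : ∑ i ∈ Finset.range n, f (i + 1)
      = (2 * n + 3) * ∑ i ∈ Finset.range n, g i + ∑ i ∈ Finset.range n, h (i + 1) := by
    rw [Finset.mul_sum, ← Finset.sum_add_distrib]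
    exact Finset.sum_congr rfl fun i hi => key i (Finset.mem_range.1 hi)
  rw [hsum]
  have f0 : f 0 = 1 := by simp [hf]; exact Nat.factorial_ne_zero _
  have h0 : h 0 = 1 := by simp [hh]; exact Nat.factorial_ne_zero _
  have b1 : f (n + 1) = (2 * n + 3) * g n := by
    simp only [hf, hg]
    rw [show n + 2 - (n + 1) = 1 by omega, show n + 1 - n = 1 by omega,
      show n + 2 + (n + 1) = (2*n + 2) + 1 by ring, Nat.factorial_succ,
      show 2*n + 2 = (2*n + 1) + 1 by ring, Nat.factorial_succ,
      show n + 1 + n = 2*n + 1 by ring,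
      Nat.factorial_succ n, pow_succ]
    have h1 : (Nat.factorial (2*n+1) : ℝ) ≠ 0 := Nat.cast_ne_zero.2 (Nat.factorial_ne_zero _)
    have h2 : (Nat.factorial n : ℝ) ≠ 0 := Nat.cast_ne_zero.2 (Nat.factorial_ne_zero _)
    have h3 : (2:ℝ) ^ n ≠ 0 := by positivity
    field_simp
    push_cast
    ring
  have b2 : f (n + 2) = (2 * n + 3) * g (n + 1) := by
    simp only [hf, hg]
    rw [show n + 2 - (n + 2) = 0 by omega, show n + 1 - (n + 1) = 0 by omega,
      show n + 2 + (n + 2) = (2*n + 3) + 1 by ring, Nat.factorial_succ,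
      show 2*n + 3 = (2*n + 2) + 1 by ring, Nat.factorial_succ,
      show n + 1 + (n + 1) = 2*n + 2 by ring,
      Nat.factorial_succ (n+1), Nat.factorial_succ n, pow_succ, pow_succ]
    have h1 : (Nat.factorial (2*n+2) : ℝ) ≠ 0 := Nat.cast_ne_zero.2 (Nat.factorial_ne_zero _)
    have h2 : (Nat.factorial n : ℝ) ≠ 0 := Nat.cast_ne_zero.2 (Nat.factorial_ne_zero _)
    have h3 : (2:ℝ) ^ n ≠ 0 := by positivity
    field_simp
    push_cast
    ring
  rw [f0, h0, b1, b2]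
  ring


lemma analyticAt_rlog {x : ℝ} (hx : 0 < x) : AnalyticAt ℝ Real.log x := by
  have h1 : AnalyticAt ℝ (fun y : ℝ => (Complex.log (y : ℂ)).re) x := by
    have h2 : AnalyticAt ℝ (⇑Complex.reCLM ∘ Complex.log ∘ (fun y : ℝ => (y : ℂ))) x :=
      (Complex.reCLM.analyticAt _).comp
        (((analyticAt_clog (Complex.ofReal_mem_slitPlane.2 hx)).restrictScalars).comp
          (Complex.ofRealCLM.analyticAt x))
    exact h2
  apply h1.congr
  filter_upwards [eventually_gt_nhds hx] with y hy
  rw [← Complex.ofReal_log hy.le, Complex.ofReal_re]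

lemma analyticAt_rsqrt {x : ℝ} (hx : 0 < x) : AnalyticAt ℝ Real.sqrt x := by
  have h1 : AnalyticAt ℝ (fun y : ℝ => Real.exp (Real.log y * (1/2))) x :=
    analyticAt_rexp.comp ((analyticAt_rlog hx).mul analyticAt_const)
  apply h1.congr
  filter_upwards [eventually_gt_nhds hx] with y hy
  rw [← Real.rpow_def_of_pos hy, ← Real.sqrt_eq_rpow]


lemma idw_id_mul {s : Set ℝ} (hs : IsOpen s) (hu : UniqueDiffOn ℝ s) :
    ∀ (n : ℕ) (u : ℝ → ℝ), (∀ m : ℕ, ContDiffOn ℝ m u s) → ∀ x ∈ s,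
      iteratedDerivWithin (n+1) (fun y => y * u y) s x
        = x * iteratedDerivWithin (n+1) u s x + (n+1) * iteratedDerivWithin n u s x := by
  intro n
  induction n with
  | zero =>
    intro u hcd x hx
    have hdu : DifferentiableAt ℝ u x :=
      (((hcd 1).contDiffAt (hs.mem_nhds hx)).differentiableAt (by norm_num))
    have hmul : HasDerivAt (fun y => y * u y) (1 * u x + x * deriv u x) x :=
      (hasDerivAt_id x).mul hdu.hasDerivAt
    rw [iteratedDerivWithin_one,
      iteratedDerivWithin_one,
      derivWithin_of_isOpen hs hx, derivWithin_of_isOpen hs hx,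
      hmul.deriv, iteratedDerivWithin_zero]
    push_cast; ring
  | succ n ih =>
    intro u hcd x hx
    have hv : ∀ m : ℕ, ContDiffOn ℝ m (derivWithin u s) s := fun m =>
      (hcd (m+1)).derivWithin hu (by exact_mod_cast le_refl _)
    have heq : Set.EqOn (derivWithin (fun y => y * u y) s)
        (fun y => u y + y * derivWithin u s y) s := by
      intro y hy
      show derivWithin (fun y => y * u y) s y = u y + y * derivWithin u s y
      have hdu : DifferentiableAt ℝ u y :=
        (((hcd 1).contDiffAt (hs.mem_nhds hy)).differentiableAt (by norm_num))
      have hmul : HasDerivAt (fun z => z * u z) (1 * u y + y * deriv u y) y :=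
        (hasDerivAt_id y).mul hdu.hasDerivAt
      rw [derivWithin_of_isOpen hs hy, derivWithin_of_isOpen hs hy, hmul.deriv]
      ring
    have hsplit : (fun y => u y + y * derivWithin u s y)
        = u + fun y => y * derivWithin u s y := rfl
    have hyv : ∀ m : ℕ, ContDiffOn ℝ m (fun y => y * derivWithin u s y) s := fun m =>
      (contDiffOn_id.mul (hv m))
    rw [iteratedDerivWithin_succ' (f := fun y => y * u y),
      iteratedDerivWithin_congr heq hx, hsplit,
      iteratedDerivWithin_add hx hu (hcd (n+1) x hx) (hyv (n+1) x hx),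
      ih _ hv x hx, ← iteratedDerivWithin_succ' (f := u) (n := n + 1),
      ← iteratedDerivWithin_succ' (f := u) (n := n)]
    push_cast; ring

theorem stmt_11 :
    ∃ ε > (0 : ℝ), ∀ x : ℝ, |x| < ε →
      HasSum (fun n : ℕ => G1 n * x ^ n / Nat.factorial n)
        (Real.exp (1 - Real.sqrt (1 - 2 * x)) / Real.sqrt (1 - 2 * x)) := by
  set s : Set ℝ := Set.Ioo (-(1/2) : ℝ) (1/2) with hsdef
  have hs : IsOpen s := isOpen_Ioo
  have hu : UniqueDiffOn ℝ s := hs.uniqueDiffOn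
  have h0 : (0:ℝ) ∈ s := by constructor <;> norm_num
  have hpos : ∀ x ∈ s, 0 < 1 - 2*x := by
    rintro x ⟨h1, h2⟩; linarith
  set F : ℝ → ℝ := fun x => Real.exp (1 - Real.sqrt (1 - 2*x)) with hFdef
  -- analyticity
  have hFa : AnalyticOnNhd ℝ F s := by
    intro x hx
    have hlin : AnalyticAt ℝ (fun y : ℝ => 1 - 2 * y) x := by
      exact analyticAt_const.sub (analyticAt_const.mul analyticAt_id)
    have hsqr : AnalyticAt ℝ (fun y : ℝ => Real.sqrt (1 - 2 * y)) x := by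
      have := AnalyticAt.comp (g := Real.sqrt) (f := fun y : ℝ => 1 - 2 * y)
        (analyticAt_rsqrt (hpos x hx)) hlin
      exact this
    have := AnalyticAt.comp (g := Real.exp) (f := fun y : ℝ => 1 - Real.sqrt (1 - 2 * y))
      analyticAt_rexp (analyticAt_const.sub hsqr)
    exact this
  have hGa : AnalyticOnNhd ℝ (deriv F) s := hFa.deriv
  have hG'a : AnalyticOnNhd ℝ (deriv (deriv F)) s := hGa.deriv
  set G : ℝ → ℝ := deriv F with hGdef
  -- derivative of sqrt(1-2x)
  have hsq : ∀ x ∈ s, HasDerivAt (fun y => Real.sqrt (1 - 2*y))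
      (-(Real.sqrt (1 - 2*x))⁻¹) x := by
    intro x hx
    have h1 : HasDerivAt (fun y : ℝ => 1 - 2*y) (-2) x := by
      simpa using ((hasDerivAt_id x).const_mul 2).const_sub 1
    have h2 := (Real.hasDerivAt_sqrt (ne_of_gt (hpos x hx))).comp x h1
    refine h2.congr_deriv ?_
    have h3 : Real.sqrt (1 - 2*x) ≠ 0 := ne_of_gt (Real.sqrt_pos.2 (hpos x hx))
    field_simp
  -- first derivative of F
  have hF' : ∀ x ∈ s, HasDerivAt F (F x * (Real.sqrt (1 - 2*x))⁻¹) x := by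
    intro x hx
    have hin : HasDerivAt (fun y => 1 - Real.sqrt (1 - 2*y)) ((Real.sqrt (1 - 2*x))⁻¹) x := by
      simpa using (hsq x hx).const_sub 1
    have := (Real.hasDerivAt_exp (1 - Real.sqrt (1 - 2*x))).comp x hin
    simpa [hFdef, mul_comm, Function.comp_def] using this
  have hGval : ∀ x ∈ s, G x = F x * (Real.sqrt (1 - 2*x))⁻¹ := fun x hx => (hF' x hx).deriv
  -- derivative of G
  have hG' : ∀ x ∈ s, HasDerivAt G
      (F x * ((Real.sqrt (1 - 2*x))⁻¹)^2 + F x * ((Real.sqrt (1 - 2*x))⁻¹)^3) x := by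
    intro x hx
    have h3 : Real.sqrt (1 - 2*x) ≠ 0 := ne_of_gt (Real.sqrt_pos.2 (hpos x hx))
    have hinv : HasDerivAt (fun y => (Real.sqrt (1 - 2*y))⁻¹)
        (((Real.sqrt (1 - 2*x))⁻¹)^3) x := by
      have := (hsq x hx).inv h3
      refine this.congr_deriv ?_
      field_simp
    have hprod := (hF' x hx).mul hinv
    have heq : G =ᶠ[𝓝 x] fun y => F y * (Real.sqrt (1 - 2*y))⁻¹ := by
      filter_upwards [hs.mem_nhds hx] with y hy using hGval y hy
    refine HasDerivAt.congr_of_eventuallyEq ?_ heq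
    refine hprod.congr_deriv ?_
    ring
  -- the ODE
  have hODE : ∀ x ∈ s, deriv G x - 2 * (x * deriv G x) = G x + F x := by
    intro x hx
    have h2 : Real.sqrt (1 - 2*x) ^ 2 = 1 - 2*x := Real.sq_sqrt (hpos x hx).le
    have h3 : Real.sqrt (1 - 2*x) ≠ 0 := ne_of_gt (Real.sqrt_pos.2 (hpos x hx))
    rw [(hG' x hx).deriv, hGval x hx]
    have : deriv G x - 2 * (x * deriv G x) = (1 - 2*x) * deriv G x := by ring
    rw [(hG' x hx).deriv] at this
    rw [← h2] at this ⊢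
    field_simp at this ⊢
    have ht : Real.sqrt (Real.sqrt (1 - 2*x) ^ 2) ^ 2 = Real.sqrt (1 - 2*x) ^ 2 :=
      Real.sq_sqrt (sq_nonneg _)
    linear_combination (Real.sqrt (Real.sqrt (1 - 2*x) ^ 2) + 1) * this
      - F x * (1 + Real.sqrt (Real.sqrt (1 - 2*x) ^ 2)) * ht
  -- smoothness
  have hFc : ∀ m : ℕ, ContDiffOn ℝ m F s := fun m => hFa.contDiffOn hu
  have hGc : ∀ m : ℕ, ContDiffOn ℝ m G s := fun m => hGa.contDiffOn hu
  have hG'c : ∀ m : ℕ, ContDiffOn ℝ m (deriv G) s := fun m => hG'a.contDiffOn hu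
  set A : ℕ → ℝ := fun n => iteratedDerivWithin n F s 0 with hAdef
  have cGF : ∀ m : ℕ, iteratedDerivWithin m G s 0 = A (m+1) := by
    intro m
    have heq : Set.EqOn G (derivWithin F s) s := fun y hy => (derivWithin_of_isOpen hs hy).symm
    rw [iteratedDerivWithin_congr heq h0, ← iteratedDerivWithin_succ']
  have cG'F : ∀ m : ℕ, iteratedDerivWithin m (deriv G) s 0 = A (m+2) := by
    intro m
    have heq : Set.EqOn (deriv G) (derivWithin G s) s :=
      fun y hy => (derivWithin_of_isOpen hs hy).symm
    rw [iteratedDerivWithin_congr heq h0, ← iteratedDerivWithin_succ', cGF (m+1)]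
  have hrec : ∀ n : ℕ, A (n+2) = (2*n+1) * A (n+1) + A n := by
    intro n
    have heqn : Set.EqOn (fun x => deriv G x - 2 * (x * deriv G x)) (fun x => G x + F x) s :=
      fun y hy => hODE y hy
    have h1 : iteratedDerivWithin n (fun x => deriv G x - 2 * (x * deriv G x)) s 0
        = iteratedDerivWithin n (fun x => G x + F x) s 0 :=
      iteratedDerivWithin_congr heqn h0
    have hL : iteratedDerivWithin n (fun x => deriv G x - 2 * (x * deriv G x)) s 0
        = A (n+2) - 2 * (n * A (n+1)) := by
      have hsub : (fun x => deriv G x - 2 * (x * deriv G x))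
          = deriv G - fun x => 2 * (x * deriv G x) := rfl
      have hc1 : ContDiffOn ℝ n (fun x => x * deriv G x) s := contDiffOn_id.mul (hG'c n)
      have hc2 : ContDiffOn ℝ n (fun x => 2 * (x * deriv G x)) s := contDiffOn_const.mul hc1
      rw [hsub, iteratedDerivWithin_sub h0 hu (hG'c n 0 h0) (hc2 0 h0),
        iteratedDerivWithin_const_mul h0 hu 2 (hc1 0 h0)]
      have hxdG : iteratedDerivWithin n (fun x => x * deriv G x) s 0 = n * A (n+1) := by
        cases n with
        | zero => simp
        | succ m =>
          rw [idw_id_mul hs hu m (deriv G) hG'c 0 h0, cG'F (m+1), cG'F m]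
          push_cast; ring
      rw [hxdG, cG'F n]
    have hR : iteratedDerivWithin n (fun x => G x + F x) s 0 = A (n+1) + A n := by
      have hadd : (fun x => G x + F x) = G + F := rfl
      rw [hadd, iteratedDerivWithin_add h0 hu (hGc n 0 h0) (hFc n 0 h0), cGF n]
    rw [hL, hR] at h1
    linarith
  have hA0 : A 0 = 1 := by
    simp [hAdef, hFdef, Real.sqrt_one]
  have hA1 : A 1 = 1 := by
    have h1 : A 1 = derivWithin F s 0 := congrFun iteratedDerivWithin_one 0
    rw [h1, derivWithin_of_isOpen hs h0]
    have h2 := hGval 0 h0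
    simp only [mul_zero, sub_zero, Real.sqrt_one, inv_one, mul_one] at h2
    rw [← hGdef, h2, hFdef]
    simp
  have key : ∀ n : ℕ, A (n+1) = G1 n ∧ A (n+2) = G1 (n+1) := by
    intro n
    induction n with
    | zero =>
      refine ⟨by rw [hA1, G1_zero], ?_⟩
      rw [hrec 0, hA1, hA0, G1_one]; norm_num
    | succ n ih =>
      refine ⟨ih.2, ?_⟩
      rw [hrec (n+1), ih.2, ih.1, G1_rec n]
      push_cast; ring
  -- power series of G at 0
  obtain ⟨p, hp⟩ := hGa 0 h0
  obtain ⟨r, hr⟩ := hp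
  have hcoeff : ∀ n : ℕ, p.coeff n = G1 n / Nat.factorial n := by
    intro n
    have h1 := hr.factorial_smul (1 : ℝ) n
    have h2 : iteratedFDeriv ℝ n G 0 (fun _ => (1:ℝ)) = iteratedDeriv n G 0 := rfl
    have h3 : iteratedDeriv n G 0 = iteratedDerivWithin n G s 0 := by
      rw [iteratedDerivWithin_eq_iteratedFDerivWithin, iteratedDeriv_eq_iteratedFDeriv,
        iteratedFDerivWithin_of_isOpen n hs h0]
    have h4 : (p n fun _ => (1:ℝ)) = p.coeff n := rfl
    rw [h2, h3, cGF n, (key n).1, h4] at h1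
    have h5 : (Nat.factorial n : ℝ) ≠ 0 := Nat.cast_ne_zero.2 (Nat.factorial_ne_zero n)
    rw [eq_div_iff h5]
    rw [nsmul_eq_mul] at h1
    linarith [h1]
  -- choose radius
  set r' : ENNReal := min r (ENNReal.ofReal (1/4)) with hr'def
  have hr'pos : 0 < r' := lt_min hr.r_pos (by norm_num)
  have hr'top : r' ≠ ⊤ := by
    refine ne_top_of_le_ne_top ?_ (min_le_right _ _)
    exact ENNReal.ofReal_ne_top
  have hball : HasFPowerSeriesOnBall G p 0 r' := hr.mono hr'pos (min_le_left _ _)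
  refine ⟨r'.toReal, ENNReal.toReal_pos hr'pos.ne' hr'top, ?_⟩
  intro x hx
  have hεle : r'.toReal ≤ 1/4 := by
    have := min_le_right r (ENNReal.ofReal (1/4))
    calc r'.toReal ≤ (ENNReal.ofReal (1/4)).toReal := ENNReal.toReal_mono ENNReal.ofReal_ne_top this
      _ = 1/4 := by rw [ENNReal.toReal_ofReal]; norm_num
  have hxs : x ∈ s := by
    have := abs_lt.1 hx
    constructor <;> [linarith; linarith]
  have hmem : x ∈ Metric.eball (0:ℝ) r' := by
    rw [EMetric.mem_ball, edist_dist, dist_zero_right, Real.norm_eq_abs]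
    have : ENNReal.ofReal |x| < ENNReal.ofReal r'.toReal :=
      (ENNReal.ofReal_lt_ofReal_iff (lt_of_le_of_lt (abs_nonneg x) hx)).2 hx
    rwa [ENNReal.ofReal_toReal hr'top] at this
  have hsum := hball.hasSum hmem
  have hval : G (0 + x) = Real.exp (1 - Real.sqrt (1 - 2*x)) / Real.sqrt (1 - 2*x) := by
    rw [zero_add, hGval x hxs, hFdef, div_eq_mul_inv]
  rw [hval] at hsum
  have hfun : (fun n => p n fun _ => x) = fun n : ℕ => G1 n * x ^ n / Nat.factorial n := by
    funext n
    rw [FormalMultilinearSeries.apply_eq_pow_smul_coeff, hcoeff n, smul_eq_mul]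
    ring
  rw [hfun] at hsum
  exact hsum
end

section
/- G_1(n) is asymptotic to e·(2n)! / (n!·2^n) as n → ∞; that is, the limit of G_1(n)·n!·2^n / ((2n)!) as n → ∞ is e. -/
open Filter Finset

/-- The auxiliary term. -/
noncomputable def Faux (n j : ℕ) : ℝ :=
  (2 : ℝ) ^ j * (Nat.descFactorial n j : ℝ) /
    ((Nat.factorial j : ℝ) * (Nat.descFactorial (2 * n) j : ℝ))

lemma nat_bound (n : ℕ) : ∀ j : ℕ, j ≤ n →
    2 ^ j * Nat.descFactorial n j ≤ Nat.descFactorial (2 * n) j := by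
  intro j
  induction j with
  | zero => simp
  | succ j ih =>
    intro hj
    have hj' : j ≤ n := Nat.le_of_succ_le hj
    rw [Nat.descFactorial_succ, Nat.descFactorial_succ, pow_succ]
    calc 2 ^ j * 2 * ((n - j) * Nat.descFactorial n j)
        = (2 * (n - j)) * (2 ^ j * Nat.descFactorial n j) := by ring
      _ ≤ (2 * n - j) * Nat.descFactorial (2 * n) j := by
          apply Nat.mul_le_mul
          · omega
          · exact ih hj'

lemma Faux_nonneg (n j : ℕ) : 0 ≤ Faux n j := by
  unfold Faux
  positivity

lemma Faux_le (n j : ℕ) : Faux n j ≤ 1 / (Nat.factorial j : ℝ) := by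
  rcases le_or_gt j n with h | h
  · have hDn : 0 < Nat.descFactorial (2 * n) j := by
      apply Nat.pos_of_ne_zero
      intro h0
      have := Nat.descFactorial_eq_zero_iff_lt.mp h0
      omega
    have hD : 0 < (Nat.descFactorial (2 * n) j : ℝ) := by exact_mod_cast hDn
    have hnum : (2 : ℝ) ^ j * (Nat.descFactorial n j : ℝ) ≤
        (Nat.descFactorial (2 * n) j : ℝ) := by
      exact_mod_cast nat_bound n j h
    have hf : (0 : ℝ) < (Nat.factorial j : ℝ) := by
      exact_mod_cast Nat.factorial_pos j
    unfold Faux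
    rw [div_le_div_iff₀ (by positivity) hf]
    nlinarith [hnum, hf.le, hD.le]
  · have : Nat.descFactorial n j = 0 := Nat.descFactorial_eq_zero_iff_lt.mpr h
    unfold Faux
    rw [this]
    simp

lemma Faux_zero_of_gt {n j : ℕ} (h : n < j) : Faux n j = 0 := by
  unfold Faux
  rw [Nat.descFactorial_eq_zero_iff_lt.mpr h]
  simp

lemma desc_cast {n j : ℕ} (h : j ≤ n) :
    (Nat.descFactorial n j : ℝ) = ∏ k ∈ Finset.range j, ((n : ℝ) - k) := by
  rw [Nat.descFactorial_eq_prod_range, Nat.cast_prod]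
  apply Finset.prod_congr rfl
  intro k hk
  have : k ≤ n := le_trans (Nat.le_of_lt (Finset.mem_range.mp hk)) h
  exact Nat.cast_sub this

lemma factor_tendsto (k : ℕ) :
    Tendsto (fun n : ℕ => (((n : ℝ)) - k) / (((2 * n : ℕ) : ℝ) - k))
      atTop (nhds (1 / 2)) := by
  have h1 : Tendsto (fun n : ℕ => (k : ℝ) / n) atTop (nhds 0) :=
    tendsto_const_div_atTop_nhds_zero_nat (k : ℝ)
  have h2 : Tendsto (fun n : ℕ => (1 - (k : ℝ) / n) / (2 - (k : ℝ) / n))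
      atTop (nhds (1 / 2)) := by
    have := Filter.Tendsto.div (Filter.Tendsto.const_sub 1 h1)
      (Filter.Tendsto.const_sub 2 h1) (by norm_num)
    simp at this
    rw [one_div]
    exact this.congr (fun n => rfl)
  apply h2.congr'
  filter_upwards [Filter.eventually_ge_atTop (k + 1)] with n hn
  have hn0 : (n : ℝ) ≠ 0 := by
    have : 0 < n := by omega
    exact_mod_cast this.ne'
  have hd : ((2 * n : ℕ) : ℝ) - k ≠ 0 := by
    push_cast
    have : (k : ℝ) < n := by exact_mod_cast hn
    nlinarith [this]
  have hd2 : (2 - (k : ℝ) / n) ≠ 0 := by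
    have : (k : ℝ) / n < 1 := by
      rw [div_lt_one (by positivity)]
      exact_mod_cast hn
    nlinarith [this]
  rw [div_eq_div_iff hd2 hd]
  push_cast
  field_simp

lemma Faux_tendsto (j : ℕ) :
    Tendsto (fun n : ℕ => Faux n j) atTop (nhds (1 / (Nat.factorial j : ℝ))) := by
  have key : Tendsto (fun n : ℕ => (2 : ℝ) ^ j / (Nat.factorial j : ℝ) *
      ∏ k ∈ Finset.range j, (((n : ℝ)) - k) / (((2 * n : ℕ) : ℝ) - k))
      atTop (nhds (1 / (Nat.factorial j : ℝ))) := by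
    have hprod : Tendsto (fun n : ℕ =>
        ∏ k ∈ Finset.range j, (((n : ℝ)) - k) / (((2 * n : ℕ) : ℝ) - k))
        atTop (nhds (∏ _k ∈ Finset.range j, (1 / 2 : ℝ))) :=
      tendsto_finset_prod _ (fun k _ => factor_tendsto k)
    have := hprod.const_mul ((2 : ℝ) ^ j / (Nat.factorial j : ℝ))
    convert this using 2
    rw [Finset.prod_const, Finset.card_range, div_pow, one_pow]
    field_simp
  apply key.congr'
  filter_upwards [Filter.eventually_ge_atTop j] with n hn
  have h2n : j ≤ 2 * n := by omega
  unfold Faux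
  rw [desc_cast hn, desc_cast h2n, Finset.prod_div_distrib]
  field_simp

lemma tsum_one_div_factorial : ∑' j : ℕ, 1 / (Nat.factorial j : ℝ) = Real.exp 1 := by
  rw [Real.exp_eq_exp_ℝ, NormedSpace.exp_eq_tsum_div]
  simp

lemma sum_eq (n : ℕ) :
    G1 n * Nat.factorial n * 2 ^ n / Nat.factorial (2 * n) = ∑' j : ℕ, Faux n j := by
  rw [tsum_eq_sum (s := Finset.range (n + 1))
    (fun j hj => Faux_zero_of_gt (by simpa using Finset.mem_range.not.mp hj))]
  unfold G1
  rw [Finset.sum_mul, Finset.sum_mul, Finset.sum_div,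
    ← Finset.sum_range_reflect]
  simp only [Nat.add_sub_cancel]
  apply Finset.sum_congr rfl
  intro j hj
  have hjn : j ≤ n := Nat.lt_succ_iff.mp (Finset.mem_range.mp hj)
  have h1 : n - (n - j) = j := by omega
  have h2 : n + (n - j) = 2 * n - j := by omega
  rw [h1, h2]
  have hfn : (Nat.factorial n : ℝ) =
      (Nat.factorial (n - j) : ℝ) * (Nat.descFactorial n j : ℝ) := by
    exact_mod_cast (Nat.factorial_mul_descFactorial hjn).symm
  have hf2n : (Nat.factorial (2 * n) : ℝ) =
      (Nat.factorial (2 * n - j) : ℝ) * (Nat.descFactorial (2 * n) j : ℝ) := by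
    exact_mod_cast (Nat.factorial_mul_descFactorial (by omega : j ≤ 2 * n)).symm
  have hpow : (2 : ℝ) ^ n = 2 ^ (n - j) * 2 ^ j := by
    rw [← pow_add]
    congr 1
    omega
  unfold Faux
  rw [hfn, hf2n, hpow]
  have hj0 : (Nat.factorial j : ℝ) ≠ 0 := by exact_mod_cast (Nat.factorial_pos j).ne'
  have hnj0 : (Nat.factorial (n - j) : ℝ) ≠ 0 := by
    exact_mod_cast (Nat.factorial_pos (n - j)).ne'
  have h2nj0 : (Nat.factorial (2 * n - j) : ℝ) ≠ 0 := by
    exact_mod_cast (Nat.factorial_pos (2 * n - j)).ne'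
  have hD0 : (Nat.descFactorial (2 * n) j : ℝ) ≠ 0 := by
    have hD : Nat.descFactorial (2 * n) j ≠ 0 := fun h0 => by
      have := Nat.descFactorial_eq_zero_iff_lt.mp h0
      omega
    exact_mod_cast hD
  have hp0 : ((2 : ℝ) ^ (n - j)) ≠ 0 := by positivity
  field_simp

theorem stmt_12 :
    Filter.Tendsto
      (fun n : ℕ => G1 n * Nat.factorial n * 2 ^ n / Nat.factorial (2 * n))
      Filter.atTop (nhds (Real.exp 1)) := by
  have hbound : Summable (fun j : ℕ => 1 / (Nat.factorial j : ℝ)) := by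
    simpa using Real.summable_pow_div_factorial 1
  have := tendsto_tsum_of_dominated_convergence (𝓕 := atTop)
    (f := fun n j => Faux n j) (g := fun j => 1 / (Nat.factorial j : ℝ))
    (bound := fun j => 1 / (Nat.factorial j : ℝ)) hbound Faux_tendsto
    (Filter.Eventually.of_forall (fun n j => by
      rw [Real.norm_eq_abs, abs_of_nonneg (Faux_nonneg n j)]
      exact Faux_le n j))
  rw [tsum_one_div_factorial] at this
  apply this.congr
  intro n
  exact (sum_eq n).symm
end
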